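/- arXiv:1405.7208 — 2 statements merged into one kernel-verified Lean document; each statement's English description precedes it below -/
import Mathlib

section
/- Let 𝒜 ⊆ P(ℕ) be an almost disjoint family. Then Ψ(𝒜) is strongly star-Hurewicz if and only if |𝒜| < 𝔟. -/
open Set Filter

universe u

/-- Least cardinality of a cofinal subset of a preorder. -/
noncomputable def poCof (α : Type u) [Preorder α] : Cardinal.{u} :=
  sInf { c | ∃ S : Set α, (∀ a : α, ∃ b ∈ S, a ≤ b) ∧ Cardinal.mk S = c }

/-- `cof([X]^ℵ₀)`: cofinality of the family of countably infinite subsets of `X`,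
ordered by inclusion. -/
noncomputable def ctblCof (X : Type u) : Cardinal.{u} :=
  poCof { A : Set X // A.Countable ∧ A.Infinite }

/-- The dominating number 𝔡. -/
noncomputable def dNum : Cardinal :=
  sInf { c | ∃ D : Set (ℕ → ℕ),
    (∀ f : ℕ → ℕ, ∃ g ∈ D, ∀ᶠ n in atTop, f n ≤ g n) ∧ Cardinal.mk D = c }

/-- The unbounding number 𝔟. -/
noncomputable def bNum : Cardinal :=
  sInf { c | ∃ B : Set (ℕ → ℕ),
    (∀ g : ℕ → ℕ, ∃ f ∈ B, ¬ ∀ᶠ n in atTop, f n ≤ g n) ∧ Cardinal.mk B = c }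

/-- An almost disjoint family on ℕ. -/
def AlmostDisjoint (𝒜 : Set (Set ℕ)) : Prop :=
  (∀ A ∈ 𝒜, A.Infinite) ∧ ∀ A ∈ 𝒜, ∀ B ∈ 𝒜, A ≠ B → (A ∩ B).Finite

/-- The underlying set of the Isbell–Mrówka space `Ψ(𝒜) = ℕ ∪ 𝒜`. -/
abbrev PsiSpace (𝒜 : Set (Set ℕ)) : Type := ℕ ⊕ ↥𝒜

/-- The Isbell–Mrówka topology: naturals are isolated, and basic neighborhoods
of `A ∈ 𝒜` are `{A} ∪ (A \ F)` for finite `F`. -/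
instance psiTop (𝒜 : Set (Set ℕ)) : TopologicalSpace (PsiSpace 𝒜) where
  IsOpen U := ∀ A : 𝒜, Sum.inr A ∈ U → { n : ℕ | n ∈ (A : Set ℕ) ∧ Sum.inl n ∉ U }.Finite
  isOpen_univ := by
    intro A _
    convert Set.finite_empty using 1
    ext n; simp
  isOpen_inter := by
    intro U V hU hV A hA
    apply ((hU A hA.1).union (hV A hA.2)).subset
    rintro n ⟨h1, h2⟩
    by_cases h : Sum.inl n ∈ U
    · exact Or.inr ⟨h1, fun hv => h2 ⟨h, hv⟩⟩
    · exact Or.inl ⟨h1, h⟩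
  isOpen_sUnion := by
    intro s hs A hA
    obtain ⟨t, ht, hAt⟩ := hA
    apply (hs t ht A hAt).subset
    rintro n ⟨h1, h2⟩
    exact ⟨h1, fun h => h2 ⟨t, ht, h⟩⟩

/-- `st(S, 𝒰) = ⋃ {U ∈ 𝒰 : U ∩ S ≠ ∅}`. -/
def starSet {X : Type*} (S : Set X) (𝒰 : Set (Set X)) : Set X :=
  ⋃₀ { U ∈ 𝒰 | (U ∩ S).Nonempty }

def StarMenger (X : Type*) [TopologicalSpace X] : Prop :=
  ∀ 𝒰 : ℕ → Set (Set X), (∀ n, ∀ U ∈ 𝒰 n, IsOpen U) → (∀ n, ⋃₀ 𝒰 n = univ) →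
    ∃ ℱ : ℕ → Set (Set X), (∀ n, ℱ n ⊆ 𝒰 n ∧ (ℱ n).Finite) ∧
      (⋃ n, starSet (⋃₀ ℱ n) (𝒰 n)) = univ

def StarHurewicz (X : Type*) [TopologicalSpace X] : Prop :=
  ∀ 𝒰 : ℕ → Set (Set X), (∀ n, ∀ U ∈ 𝒰 n, IsOpen U) → (∀ n, ⋃₀ 𝒰 n = univ) →
    ∃ ℱ : ℕ → Set (Set X), (∀ n, ℱ n ⊆ 𝒰 n ∧ (ℱ n).Finite) ∧
      ∀ x : X, ∀ᶠ n in atTop, x ∈ starSet (⋃₀ ℱ n) (𝒰 n)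

def StarRothberger (X : Type*) [TopologicalSpace X] : Prop :=
  ∀ 𝒰 : ℕ → Set (Set X), (∀ n, ∀ U ∈ 𝒰 n, IsOpen U) → (∀ n, ⋃₀ 𝒰 n = univ) →
    ∃ U : ℕ → Set X, (∀ n, U n ∈ 𝒰 n) ∧ (⋃ n, starSet (U n) (𝒰 n)) = univ

def StronglyStarMenger (X : Type*) [TopologicalSpace X] : Prop :=
  ∀ 𝒰 : ℕ → Set (Set X), (∀ n, ∀ U ∈ 𝒰 n, IsOpen U) → (∀ n, ⋃₀ 𝒰 n = univ) →
    ∃ F : ℕ → Set X, (∀ n, (F n).Finite) ∧ (⋃ n, starSet (F n) (𝒰 n)) = univ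

def StronglyStarHurewicz (X : Type*) [TopologicalSpace X] : Prop :=
  ∀ 𝒰 : ℕ → Set (Set X), (∀ n, ∀ U ∈ 𝒰 n, IsOpen U) → (∀ n, ⋃₀ 𝒰 n = univ) →
    ∃ F : ℕ → Set X, (∀ n, (F n).Finite) ∧
      ∀ x : X, ∀ᶠ n in atTop, x ∈ starSet (F n) (𝒰 n)


lemma countable_bounded {S : Set (ℕ → ℕ)} (hS : S.Countable) :
    ∃ g : ℕ → ℕ, ∀ f ∈ S, ∀ᶠ n in atTop, f n ≤ g n := by
  rcases S.eq_empty_or_nonempty with h | h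
  · exact ⟨fun _ => 0, by simp [h]⟩
  · obtain ⟨e, he⟩ := Set.Countable.exists_eq_range hS h
    refine ⟨fun n => (Finset.range (n+1)).sup (fun k => e k n), ?_⟩
    intro f hf
    rw [he] at hf
    obtain ⟨k, rfl⟩ := hf
    filter_upwards [eventually_ge_atTop k] with n hn
    exact Finset.le_sup (f := fun k => e k n) (Finset.mem_range.mpr (by omega))

lemma small_bounded {D : Set (ℕ → ℕ)} (hD : Cardinal.mk D < bNum) :
    ∃ g : ℕ → ℕ, ∀ f ∈ D, ∀ᶠ n in atTop, f n ≤ g n := by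
  by_contra h
  simp only [not_exists, not_forall, _root_.not_imp, exists_prop] at h
  exact absurd (csInf_le (OrderBot.bddBelow _) ⟨D, h, rfl⟩ : bNum ≤ _) (not_le.mpr hD)

lemma bNum_attained : ∃ B : Set (ℕ → ℕ),
    (∀ g : ℕ → ℕ, ∃ f ∈ B, ¬ ∀ᶠ n in atTop, f n ≤ g n) ∧ Cardinal.mk B = bNum := by
  have hne : { c | ∃ B : Set (ℕ → ℕ),
      (∀ g : ℕ → ℕ, ∃ f ∈ B, ¬ ∀ᶠ n in atTop, f n ≤ g n) ∧ Cardinal.mk B = c }.Nonempty := by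
    refine ⟨_, Set.univ, fun g => ⟨fun n => g n + 1, trivial, fun h => ?_⟩, rfl⟩
    obtain ⟨n, hn⟩ := h.exists
    simp at hn
  exact csInf_mem hne

/-- Bonanzinga–Matveev: `Ψ(𝒜)` is strongly star-Hurewicz iff `|𝒜| < 𝔟`. -/
theorem stronglyStarHurewicz_psiSpace_iff (𝒜 : Set (Set ℕ)) (had : AlmostDisjoint 𝒜) :
    StronglyStarHurewicz (PsiSpace 𝒜) ↔ Cardinal.mk ↥𝒜 < bNum := by
  classical
  constructor
  · -- forward direction
    intro hS
    by_contra hlt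
    push_neg at hlt
    obtain ⟨B, hBunb, hBcard⟩ := bNum_attained
    have hle : Cardinal.mk ↥B ≤ Cardinal.mk ↥𝒜 := hBcard ▸ hlt
    obtain ⟨ι⟩ := (Cardinal.le_def _ _).mp hle
    -- thresholds
    set thr : ↥𝒜 → ℕ → ℕ := fun A =>
      if h : ∃ f : ↥B, ι f = A then ((h.choose : ↥B) : ℕ → ℕ) else fun _ => 0 with hthrdef
    have thr_eq : ∀ f : ↥B, thr (ι f) = (f : ℕ → ℕ) := by
      intro f
      have h : ∃ f' : ↥B, ι f' = ι f := ⟨f, rfl⟩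
      simp only [hthrdef, dif_pos h]
      congr 1
      exact ι.injective h.choose_spec
    set V : ↥𝒜 → ℕ → Set (PsiSpace 𝒜) := fun A n =>
      {x | x = Sum.inr A ∨ ∃ m, m ∈ (A : Set ℕ) ∧ thr A n ≤ m ∧ x = Sum.inl m} with hVdef
    set 𝒰 : ℕ → Set (Set (PsiSpace 𝒜)) := fun n =>
      {U | (∃ m : ℕ, U = {Sum.inl m}) ∨ ∃ A : ↥𝒜, U = V A n} with h𝒰def
    have hopen : ∀ n, ∀ U ∈ 𝒰 n, IsOpen U := by
      intro n U hU A' hA'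
      rcases hU with ⟨m, rfl⟩ | ⟨A, rfl⟩
      · simp at hA'
      · have hAA : A' = A := by
          rcases hA' with h | ⟨m, _, _, h⟩
          · exact Sum.inr_injective h
          · exact absurd h (by simp)
        subst hAA
        apply (Set.finite_Iio (thr A' n)).subset
        rintro m ⟨hm1, hm2⟩
        by_contra hlt2
        rw [Set.mem_Iio, not_lt] at hlt2
        exact hm2 (Or.inr ⟨m, hm1, hlt2, rfl⟩)
    have hcov : ∀ n, ⋃₀ 𝒰 n = univ := by
      intro n
      apply Set.eq_univ_of_forall
      rintro (m | A)
      · exact ⟨{Sum.inl m}, Or.inl ⟨m, rfl⟩, rfl⟩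
      · exact ⟨V A n, Or.inr ⟨A, rfl⟩, Or.inl rfl⟩
    obtain ⟨F, hFfin, hFst⟩ := hS 𝒰 hopen hcov
    -- the function g bounding the naturals in F n
    have hN : ∀ n, {m : ℕ | Sum.inl m ∈ F n}.Finite := by
      intro n
      exact Set.Finite.preimage (Set.injOn_of_injective Sum.inl_injective) (hFfin n)
    set g : ℕ → ℕ := fun n => (hN n).toFinset.sup id with hgdef
    have hg : ∀ n m, Sum.inl m ∈ F n → m ≤ g n := by
      intro n m hm
      exact Finset.le_sup (f := id) ((hN n).mem_toFinset.mpr hm)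
    -- the countable bad set
    set Bad : Set ↥B := {f : ↥B | ∃ n, Sum.inr (ι f) ∈ F n} with hBaddef
    have hBadc : Bad.Countable := by
      have : Bad = ⋃ n, {f : ↥B | Sum.inr (ι f) ∈ F n} := by
        ext f; simp [hBaddef]
      rw [this]
      refine Set.countable_iUnion fun n => Set.Finite.countable ?_
      have : {f : ↥B | Sum.inr (ι f) ∈ F n} = (fun f : ↥B => Sum.inr (ι f)) ⁻¹' F n := rfl
      rw [this]
      exact Set.Finite.preimage
        (Set.injOn_of_injective fun a b h => ι.injective (Sum.inr_injective h)) (hFfin n)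
    obtain ⟨g₁, hg₁⟩ := countable_bounded ((hBadc.image (fun f : ↥B => (f : ℕ → ℕ))))
    obtain ⟨f₀, hf₀B, hf₀⟩ := hBunb (fun n => max (g n) (g₁ n))
    set fB : ↥B := ⟨f₀, hf₀B⟩ with hfBdef
    have hfBnot : fB ∉ Bad := by
      intro hmem
      apply hf₀
      have h1 := hg₁ f₀ ⟨fB, hmem, rfl⟩
      filter_upwards [h1] with n hn
      exact le_trans hn (le_max_right _ _)
    apply hf₀
    filter_upwards [hFst (Sum.inr (ι fB))] with n hn
    obtain ⟨U, ⟨hU𝒰, hUne⟩, hxU⟩ := hn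
    rcases hU𝒰 with ⟨m, rfl⟩ | ⟨A, rfl⟩
    · simp at hxU
    · have hAeq : A = ι fB := by
        rcases hxU with h | ⟨m, _, _, h⟩
        · exact (Sum.inr_injective h).symm
        · exact absurd h (by simp)
      subst hAeq
      obtain ⟨y, hyV, hyF⟩ := hUne
      rcases hyV with rfl | ⟨m, hmA, hthr2, rfl⟩
      · exact absurd ⟨n, hyF⟩ hfBnot
      · have h1 : m ≤ g n := hg n m hyF
        have h2 : thr (ι fB) n ≤ m := hthr2
        rw [thr_eq fB] at h2
        have h3 : (fB : ℕ → ℕ) = f₀ := rfl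
        rw [h3] at h2
        exact le_trans (le_trans h2 h1) (le_max_left _ _)
  · -- backward direction
    intro hlt 𝒰 hopen hcov
    have hU : ∀ (A : ↥𝒜) (n : ℕ), ∃ U ∈ 𝒰 n, Sum.inr A ∈ U := by
      intro A n
      exact Set.mem_sUnion.mp ((hcov n).symm ▸ Set.mem_univ (Sum.inr A))
    choose U hU𝒰 hUA using hU
    have hpick : ∀ (A : ↥𝒜) (n : ℕ), ∃ m, m ∈ (A : Set ℕ) ∧ Sum.inl m ∈ U A n := by
      intro A n
      have hfin := hopen n (U A n) (hU𝒰 A n) A (hUA A n)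
      have hinf : ((A : Set ℕ) \ {m | m ∈ (A : Set ℕ) ∧ Sum.inl m ∉ U A n}).Nonempty :=
        ((had.1 A A.2).diff hfin).nonempty
      obtain ⟨m, hm1, hm2⟩ := hinf
      refine ⟨m, hm1, ?_⟩
      by_contra hc
      exact hm2 ⟨hm1, hc⟩
    choose f hfA hfU using hpick
    have hD : Cardinal.mk ↥(Set.range f) < bNum := lt_of_le_of_lt Cardinal.mk_range_le hlt
    obtain ⟨g, hg⟩ := small_bounded hD
    refine ⟨fun n => Sum.inl '' {m | m ≤ max (g n) n}, ?_, ?_⟩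
    · intro n
      exact (Set.finite_Iic (max (g n) n)).image _
    · rintro (m | A)
      · filter_upwards [eventually_ge_atTop m] with n hn
        obtain ⟨W, hW, hmW⟩ := Set.mem_sUnion.mp ((hcov n).symm ▸ Set.mem_univ (Sum.inl m))
        exact Set.mem_sUnion.mpr
          ⟨W, ⟨hW, ⟨Sum.inl m, hmW, ⟨m, le_trans hn (le_max_right _ _), rfl⟩⟩⟩, hmW⟩
      · filter_upwards [hg (f A) ⟨A, rfl⟩] with n hn
        exact Set.mem_sUnion.mpr
          ⟨U A n, ⟨hU𝒰 A n, ⟨Sum.inl (f A n), hfU A n,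
            ⟨f A n, le_trans hn (le_max_left _ _), rfl⟩⟩⟩, hUA A n⟩
end

section
/- Let ℵ_α = 𝔡. If ℵ_{α+ω} < 𝔠, then there is a cardinal κ < 𝔠 (namely κ = ℵ_{α+ω}) such that cof(Fin(κ)^ℕ) > 𝔡 · κ. -/
open Set Filter

universe u

private lemma aux_cof_gt (κ : Cardinal.{0}) (hκinf' : Cardinal.aleph0 < κ)
    (hcof : κ.ord.cof = Cardinal.aleph0)
    (T : Set (ℕ → Finset (Quotient.out κ)))
    (hTcof : ∀ a, ∃ b ∈ T, a ≤ b) :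
    κ < Cardinal.mk T := by
  by_contra hle
  push_neg at hle
  have hκinf : Cardinal.aleph0 ≤ κ := hκinf'.le
  have hmkO : Cardinal.mk κ.ord.ToType = κ := by
    rw [Cardinal.mk_toType, Cardinal.card_ord]
  obtain ⟨S, hSunb, hSmk⟩ := Order.exists_cof_eq κ.ord.ToType
  rw [Ordinal.cof_toType, hcof] at hSmk
  have hSne : S.Nonempty := by
    have : Nonempty κ.ord.ToType := by
      rw [Ordinal.toType_nonempty_iff_ne_zero]
      simp [Cardinal.ord_eq_zero, (Cardinal.aleph0_pos.trans hκinf').ne']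
    obtain ⟨a⟩ := this
    obtain ⟨b, hb, _⟩ := hSunb a
    exact ⟨b, hb⟩
  obtain ⟨s, hs⟩ := (Set.countable_iff_exists_surjective hSne).1 (by
    rw [← Cardinal.le_aleph0_iff_set_countable, hSmk])
  obtain ⟨ι⟩ : Nonempty (↥T ↪ κ.ord.ToType) := by
    rw [← Cardinal.le_def, hmkO]; exact hle
  obtain ⟨φ⟩ : Nonempty (Quotient.out κ ≃ κ.ord.ToType) := by
    rw [← Cardinal.eq, Cardinal.mk_out, hmkO]
  set Bad : ℕ → Set κ.ord.ToType := fun n =>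
    ⋃ t ∈ {t : ↥T | ι t ≤ (s n : κ.ord.ToType)},
      ⋃ m, φ '' ((t : ℕ → Finset (Quotient.out κ)) m : Set (Quotient.out κ)) with hBadDef
  have hBad : ∀ n, Cardinal.mk (Bad n) < κ := by
    intro n
    refine lt_of_le_of_lt (Cardinal.mk_biUnion_le _ _) ?_
    apply Cardinal.mul_lt_of_lt hκinf
    · have h1 : {t : ↥T | ι t ≤ (s n : κ.ord.ToType)} ⊆
          ι ⁻¹' (Set.Iic (s n : κ.ord.ToType)) := fun t ht => ht
      refine lt_of_le_of_lt (Cardinal.mk_le_mk_of_subset h1) ?_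
      refine lt_of_le_of_lt (Cardinal.mk_preimage_of_injective ι _ ι.injective) ?_
      have h2 : Set.Iic (s n : κ.ord.ToType) =
          insert (s n : κ.ord.ToType) (Set.Iio (s n : κ.ord.ToType)) := by
        ext y; simp [le_iff_lt_or_eq, or_comm]
      rw [h2]
      refine lt_of_le_of_lt Cardinal.mk_insert_le ?_
      exact Cardinal.add_lt_of_lt hκinf (Cardinal.mk_Iio_ord_toType _)
        (Cardinal.one_lt_aleph0.trans hκinf')
    · refine lt_of_le_of_lt ?_ hκinf'
      rcases isEmpty_or_nonempty ↥{t : ↥T | ι t ≤ (s n : κ.ord.ToType)} with hE | hN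
      · rw [iSup_of_empty', csSup_empty]
        exact bot_le
      · refine ciSup_le' fun t => ?_
        rw [Cardinal.le_aleph0_iff_set_countable]
        exact Set.countable_iUnion fun m =>
          ((((t : ↥T) : ℕ → Finset (Quotient.out κ)) m).finite_toSet.image φ).countable
  have hx : ∀ n, ∃ x, x ∉ Bad n := by
    intro n
    rw [← Set.ne_univ_iff_exists_notMem]
    intro hu
    have := hBad n
    rw [hu, Cardinal.mk_univ, hmkO] at this
    exact lt_irrefl _ this
  choose x hxn using hx
  obtain ⟨t, ht, hft⟩ := hTcof (fun n => ({φ.symm (x n)} : Finset (Quotient.out κ)))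
  obtain ⟨b, hbS, hnb⟩ := hSunb (ι ⟨t, ht⟩)
  obtain ⟨n, hn⟩ := hs ⟨b, hbS⟩
  refine hxn n ?_
  have hb' : ι ⟨t, ht⟩ ≤ (s n : κ.ord.ToType) := by
    rw [hn]; exact hnb
  refine Set.mem_biUnion hb' ?_
  refine Set.mem_iUnion.2 ⟨n, ⟨φ.symm (x n), ?_, φ.apply_symm_apply (x n)⟩⟩
  exact Finset.singleton_subset_iff.mp (hft n)

/-- if `ℵ_α = 𝔡` and `ℵ_{α+ω} < 𝔠`, then there is `κ < 𝔠`
(namely `κ = ℵ_{α+ω}`) with `cof(Fin(κ)^ℕ) > 𝔡·κ`. -/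
theorem exists_cof_finFun_gt (α : Ordinal.{0}) (hα : Cardinal.aleph α = dNum)
    (h : Cardinal.aleph (α + Ordinal.omega0) < Cardinal.continuum) :
    ∃ κ : Cardinal.{0}, κ = Cardinal.aleph (α + Ordinal.omega0) ∧
      κ < Cardinal.continuum ∧
      dNum * κ < poCof (ℕ → Finset (Quotient.out κ)) := by
  refine ⟨Cardinal.aleph (α + Ordinal.omega0), rfl, h, ?_⟩
  set κ := Cardinal.aleph (α + Ordinal.omega0) with hκ
  have hκinf : Cardinal.aleph0 ≤ κ := Cardinal.aleph0_le_aleph _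
  have hdκ : dNum * κ = κ := by
    refine Cardinal.mul_eq_right hκinf ?_ ?_
    · rw [← hα]; exact Cardinal.aleph_le_aleph.mpr (le_self_add (a := α) (b := Ordinal.omega0))
    · rw [← hα]; exact (Cardinal.aleph_pos α).ne'
  rw [hdκ]
  have hne : { c | ∃ S : Set (ℕ → Finset (Quotient.out κ)),
      (∀ a, ∃ b ∈ S, a ≤ b) ∧ Cardinal.mk S = c }.Nonempty :=
    ⟨_, Set.univ, fun a => ⟨a, Set.mem_univ a, le_refl a⟩, rfl⟩
  obtain ⟨T, hTcof, hTmk⟩ := csInf_mem hne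
  unfold poCof
  rw [← hTmk]
  refine aux_cof_gt κ ?_ ?_ T hTcof
  · rw [hκ, ← Cardinal.aleph_zero, Cardinal.aleph_lt_aleph]
    exact Ordinal.omega0_pos.trans_le (le_add_self (a := Ordinal.omega0) (b := α))
  · rw [hκ, Cardinal.ord_aleph, Ordinal.cof_omega (Ordinal.isSuccLimit_add α Ordinal.isSuccLimit_omega0),
      Ordinal.cof_add _ Ordinal.omega0_ne_zero, Ordinal.cof_omega0]
end
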